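/- Let F be a C^2 symmetric function on the open positive cone Γ₊ ⊂ ℝⁿ, positively homogeneous of degree d₀ > 0, with all partial derivatives F_i > 0 on Γ₊. If there exists a constant c ≥ 1 such that for all κ ∈ Γ₊ and all ξ ∈ ℝⁿ one has F_{ij}(κ) ξ^i ξ^j ≤ c F(κ)^{-1} (F_i(κ) ξ^i)² − F_i(κ) κ_i^{-1} |ξ^i|², and additionally F_i κ_i ≤ F_j κ_j whenever κ_j ≤ κ_i, then the same inequality holds with constant c = 1, i.e. F_{ij} ξ^i ξ^j ≤ F^{-1}(F_i ξ^i)² − F_i κ_i^{-1} |ξ^i|² for all ξ ∈ ℝⁿ. -/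

import Mathlib

noncomputable def pd {n : ℕ} (F : (Fin n → ℝ) → ℝ) (κ : Fin n → ℝ) (i : Fin n) : ℝ :=
  fderiv ℝ F κ (Pi.single i 1)

noncomputable def pd2 {n : ℕ} (F : (Fin n → ℝ) → ℝ) (κ : Fin n → ℝ) (i j : Fin n) : ℝ :=
  fderiv ℝ (fun x => fderiv ℝ F x (Pi.single j 1)) κ (Pi.single i 1)

private lemma stmt0_Uopen (n : ℕ) : IsOpen {κ : Fin n → ℝ | ∀ i, 0 < κ i} := by
  have h : {κ : Fin n → ℝ | ∀ i, 0 < κ i} = Set.univ.pi fun _ => Set.Ioi (0:ℝ) := by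
    ext κ; simp [Set.mem_pi]
  rw [h]; exact isOpen_set_pi Set.finite_univ fun i _ => isOpen_Ioi

private lemma stmt0_euler {n : ℕ} {G : (Fin n → ℝ) → ℝ} {d : ℝ}
    (hG : DifferentiableOn ℝ G {κ : Fin n → ℝ | ∀ i, 0 < κ i})
    (hhom : ∀ κ : Fin n → ℝ, (∀ i, 0 < κ i) → ∀ t : ℝ, 0 < t → G (t • κ) = t ^ d * G κ)
    (κ : Fin n → ℝ) (hκ : ∀ i, 0 < κ i) : fderiv ℝ G κ κ = d * G κ := by
  have hUκ : {κ : Fin n → ℝ | ∀ i, 0 < κ i} ∈ nhds κ := (stmt0_Uopen n).mem_nhds hκ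
  have hdiff : DifferentiableAt ℝ G κ := hG.differentiableAt hUκ
  have h1 : HasDerivAt (fun t : ℝ => t • κ) κ 1 := by
    simpa using (hasDerivAt_id (1:ℝ)).smul_const κ
  have h2 : HasDerivAt (fun t : ℝ => G (t • κ)) (fderiv ℝ G κ κ) 1 := by
    have hF : HasFDerivAt G (fderiv ℝ G κ) ((fun t : ℝ => t • κ) 1) := by
      simpa using hdiff.hasFDerivAt
    exact hF.comp_hasDerivAt 1 h1
  have h3 : (fun t : ℝ => G (t • κ)) =ᶠ[nhds 1] fun t : ℝ => t ^ d * G κ := by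
    filter_upwards [Ioi_mem_nhds (zero_lt_one (α := ℝ))] with t ht
    exact hhom κ hκ t ht
  have h4 : HasDerivAt (fun t : ℝ => t ^ d * G κ) (d * G κ) 1 := by
    have := (Real.hasDerivAt_rpow_const (x := (1:ℝ)) (p := d) (Or.inl one_ne_zero)).mul_const (G κ)
    simpa using this
  have h2' : HasDerivAt (fun t : ℝ => t ^ d * G κ) (fderiv ℝ G κ κ) 1 :=
    h2.congr_of_eventuallyEq h3.symm
  exact h2'.unique h4

private lemma stmt0_fderiv_sum {n : ℕ} (G : (Fin n → ℝ) → ℝ) (κ v : Fin n → ℝ) :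
    fderiv ℝ G κ v = ∑ i, v i * fderiv ℝ G κ (Pi.single i 1) := by
  have hv : v = ∑ i, v i • (Pi.single i 1 : Fin n → ℝ) := by
    ext j
    simp [Finset.sum_apply, Pi.single_apply]
  conv_lhs => rw [hv]
  simp [smul_eq_mul]

private lemma stmt0_grad_hom {n : ℕ} {F : (Fin n → ℝ) → ℝ} {d₀ : ℝ}
    (hC1 : DifferentiableOn ℝ F {κ : Fin n → ℝ | ∀ i, 0 < κ i})
    (hhom : ∀ κ : Fin n → ℝ, (∀ i, 0 < κ i) → ∀ t : ℝ, 0 < t → F (t • κ) = t ^ d₀ * F κ)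
    (κ : Fin n → ℝ) (hκ : ∀ i, 0 < κ i) (t : ℝ) (ht : 0 < t) (v : Fin n → ℝ) :
    fderiv ℝ F (t • κ) v = t ^ (d₀ - 1) * fderiv ℝ F κ v := by
  have hU : IsOpen {κ : Fin n → ℝ | ∀ i, 0 < κ i} := stmt0_Uopen n
  have htκ : ∀ i, 0 < (t • κ) i := fun i => by simpa using mul_pos ht (hκ i)
  have hd1 : DifferentiableAt ℝ F (t • κ) := hC1.differentiableAt (hU.mem_nhds htκ)
  have hsm : HasFDerivAt (fun x : Fin n → ℝ => t • x) (t • ContinuousLinearMap.id ℝ (Fin n → ℝ)) κ :=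
    (hasFDerivAt_id κ).const_smul t
  have hcomp : HasFDerivAt (fun x : Fin n → ℝ => F (t • x))
      ((fderiv ℝ F (t • κ)).comp (t • ContinuousLinearMap.id ℝ (Fin n → ℝ))) κ :=
    hd1.hasFDerivAt.comp κ hsm
  have heq : (fun x : Fin n → ℝ => F (t • x)) =ᶠ[nhds κ] fun x => t ^ d₀ * F x := by
    filter_upwards [hU.mem_nhds hκ] with x hx
    exact hhom x hx t ht
  have hrhs : HasFDerivAt (fun x : Fin n → ℝ => t ^ d₀ * F x)
      ((fderiv ℝ F (t • κ)).comp (t • ContinuousLinearMap.id ℝ (Fin n → ℝ))) κ :=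
    hcomp.congr_of_eventuallyEq heq.symm
  have hrhs2 : HasFDerivAt (fun x : Fin n → ℝ => t ^ d₀ * F x)
      ((t ^ d₀ : ℝ) • fderiv ℝ F κ) κ :=
    (hC1.differentiableAt (hU.mem_nhds hκ)).hasFDerivAt.const_mul (t ^ d₀)
  have huniq := hrhs.unique hrhs2
  have happ := congrArg (fun L : (Fin n → ℝ) →L[ℝ] ℝ => L v) huniq
  simp only [ContinuousLinearMap.comp_apply, ContinuousLinearMap.smul_apply,
    ContinuousLinearMap.coe_smul', Pi.smul_apply, ContinuousLinearMap.id_apply] at happ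
  have ht' : (t:ℝ) ≠ 0 := ne_of_gt ht
  have hpow : t ^ d₀ = t * t ^ (d₀ - 1) := by
    rw [Real.rpow_sub_one ht']; field_simp
  have hmm : t * fderiv ℝ F (t • κ) v = t * (t ^ (d₀ - 1) * fderiv ℝ F κ v) := by
    rw [← mul_assoc, ← hpow]
    simpa [smul_eq_mul, mul_comm] using happ
  exact mul_left_cancel₀ ht' hmm

/-- if the concavity-type inequality holds with some constant c ≥ 1,
together with the monotonicity condition F_i κ_i ≤ F_j κ_j for κ_j ≤ κ_i, then it
holds with constant c = 1. -/
theorem stmt0 (n : ℕ) (F : (Fin n → ℝ) → ℝ) (d₀ : ℝ) (hd₀ : 0 < d₀)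
    (hsym : ∀ (κ : Fin n → ℝ), (∀ i, 0 < κ i) → ∀ g : Equiv.Perm (Fin n), F (κ ∘ g) = F κ)
    (hC2 : ContDiffOn ℝ 2 F {κ : Fin n → ℝ | ∀ i, 0 < κ i})
    (hhom : ∀ (κ : Fin n → ℝ), (∀ i, 0 < κ i) → ∀ t : ℝ, 0 < t → F (t • κ) = t ^ d₀ * F κ)
    (hFi : ∀ (κ : Fin n → ℝ), (∀ i, 0 < κ i) → ∀ i, 0 < pd F κ i)
    (c : ℝ) (hc : 1 ≤ c)
    (hineq : ∀ (κ : Fin n → ℝ), (∀ i, 0 < κ i) → ∀ ξ : Fin n → ℝ,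
      ∑ i, ∑ j, pd2 F κ i j * ξ i * ξ j ≤
        c * (F κ)⁻¹ * (∑ i, pd F κ i * ξ i) ^ 2 - ∑ i, pd F κ i * (κ i)⁻¹ * (ξ i) ^ 2)
    (hmono : ∀ (κ : Fin n → ℝ), (∀ i, 0 < κ i) → ∀ i j, κ j ≤ κ i →
      pd F κ i * κ i ≤ pd F κ j * κ j) :
    ∀ (κ : Fin n → ℝ), (∀ i, 0 < κ i) → ∀ ξ : Fin n → ℝ,
      ∑ i, ∑ j, pd2 F κ i j * ξ i * ξ j ≤
        (F κ)⁻¹ * (∑ i, pd F κ i * ξ i) ^ 2 - ∑ i, pd F κ i * (κ i)⁻¹ * (ξ i) ^ 2 := by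
  intro κ hκ ξ
  rcases isEmpty_or_nonempty (Fin n) with hempty | hne
  · simp [Finset.univ_eq_empty]
  have hU : IsOpen {κ : Fin n → ℝ | ∀ i, 0 < κ i} := stmt0_Uopen n
  have hUκ : {κ : Fin n → ℝ | ∀ i, 0 < κ i} ∈ nhds κ := hU.mem_nhds hκ
  have hC1 : DifferentiableOn ℝ F {κ : Fin n → ℝ | ∀ i, 0 < κ i} :=
    hC2.differentiableOn (by norm_num)
  -- first Euler relation
  have E1 : ∑ i, pd F κ i * κ i = d₀ * F κ := by
    have h := stmt0_euler hC1 hhom κ hκ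
    rw [stmt0_fderiv_sum F κ κ] at h
    rw [← h]
    exact Finset.sum_congr rfl fun i _ => mul_comm _ _
  -- the gradient components are C¹ on U
  have hGC1 : ∀ j, DifferentiableOn ℝ (fun x => fderiv ℝ F x (Pi.single j 1))
      {κ : Fin n → ℝ | ∀ i, 0 < κ i} := by
    intro j
    have h1 : ContDiffOn ℝ 1 (fderiv ℝ F) {κ : Fin n → ℝ | ∀ i, 0 < κ i} :=
      hC2.fderiv_of_isOpen hU (by norm_num)
    exact (h1.clm_apply contDiffOn_const).differentiableOn one_ne_zero
  -- homogeneity of the gradient components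
  have hGhom : ∀ j, ∀ κ' : Fin n → ℝ, (∀ i, 0 < κ' i) → ∀ t : ℝ, 0 < t →
      (fun x => fderiv ℝ F x (Pi.single j 1)) (t • κ') =
        t ^ (d₀ - 1) * (fun x => fderiv ℝ F x (Pi.single j 1)) κ' := by
    intro j κ' hκ' t ht
    exact stmt0_grad_hom hC1 hhom κ' hκ' t ht (Pi.single j 1)
  -- column Euler relation: ∑ i, pd2 F κ i j * κ i = (d₀ - 1) * pd F κ j
  have hcol : ∀ j, ∑ i, pd2 F κ i j * κ i = (d₀ - 1) * pd F κ j := by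
    intro j
    have h := stmt0_euler (hGC1 j) (hGhom j) κ hκ
    rw [stmt0_fderiv_sum _ κ κ] at h
    simp only [pd, pd2]
    rw [← h]
    exact Finset.sum_congr rfl fun i _ => mul_comm _ _
  -- symmetry of second derivatives
  have hsymm2 : ∀ i j, pd2 F κ i j = pd2 F κ j i := by
    have hat : ContDiffAt ℝ 2 F κ := hC2.contDiffAt hUκ
    have hd : DifferentiableAt ℝ (fderiv ℝ F) κ :=
      (hat.fderiv_right (m := 1) (by norm_num)).differentiableAt one_ne_zero
    have key : ∀ u w : Fin n → ℝ,
        fderiv ℝ (fun x => fderiv ℝ F x u) κ w = fderiv ℝ (fderiv ℝ F) κ w u := by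
      intro u w
      rw [fderiv_clm_apply (c := fderiv ℝ F) (u := fun _ => u) hd (differentiableAt_const u)]
      simp
    have hsy : IsSymmSndFDerivAt ℝ F κ := hat.isSymmSndFDerivAt (by norm_num)
    intro i j
    rw [pd2, pd2, key, key, hsy.eq]
  have hrow : ∀ i, ∑ j, pd2 F κ i j * κ j = (d₀ - 1) * pd F κ i := by
    intro i
    rw [← hcol i]
    exact Finset.sum_congr rfl fun j _ => by rw [hsymm2 i j]
  -- positivity of F
  have hDpos : 0 < d₀ * F κ := by
    rw [← E1]
    exact Finset.sum_pos (fun i _ => mul_pos (hFi κ hκ i) (hκ i)) Finset.univ_nonempty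
  have hFpos : 0 < F κ := by
    by_contra h
    push_neg at h
    nlinarith
  -- the key substitution
  set Fv := F κ with hFv
  set S := ∑ i, pd F κ i * ξ i with hS
  set t := -S / (d₀ * Fv) with ht
  have hDne : d₀ * Fv ≠ 0 := ne_of_gt hDpos
  have htD : t * (d₀ * Fv) = -S := by
    rw [ht]; field_simp
  set η := ξ + t • κ with hη
  have hηi : ∀ i, η i = ξ i + t * κ i := fun i => rfl
  -- the linear term vanishes
  have hzero : ∑ i, pd F κ i * η i = 0 := by
    have : ∑ i, pd F κ i * η i = S + t * (d₀ * Fv) := by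
      calc ∑ i, pd F κ i * η i
          = ∑ i, (pd F κ i * ξ i + t * (pd F κ i * κ i)) := by
            refine Finset.sum_congr rfl fun i _ => ?_
            rw [hηi i]; ring
        _ = S + t * ∑ i, pd F κ i * κ i := by
            rw [Finset.sum_add_distrib, ← Finset.mul_sum]
        _ = S + t * (d₀ * Fv) := by rw [E1]
    rw [this, htD]; ring
  -- the weighted square term
  have hsq : ∑ i, pd F κ i * (κ i)⁻¹ * η i ^ 2 =
      (∑ i, pd F κ i * (κ i)⁻¹ * ξ i ^ 2) + 2 * t * S + t ^ 2 * (d₀ * Fv) := by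
    calc ∑ i, pd F κ i * (κ i)⁻¹ * η i ^ 2
        = ∑ i, (pd F κ i * (κ i)⁻¹ * ξ i ^ 2 + 2 * t * (pd F κ i * ξ i)
            + t ^ 2 * (pd F κ i * κ i)) := by
          refine Finset.sum_congr rfl fun i _ => ?_
          have hki : (κ i) ≠ 0 := ne_of_gt (hκ i)
          rw [hηi i]; field_simp; ring
      _ = (∑ i, pd F κ i * (κ i)⁻¹ * ξ i ^ 2) + 2 * t * S + t ^ 2 * (d₀ * Fv) := by
          rw [Finset.sum_add_distrib, Finset.sum_add_distrib, ← Finset.mul_sum,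
            ← Finset.mul_sum, E1]
  -- the quadratic form term
  have hxi : ∑ i, ξ i * ((d₀ - 1) * pd F κ i) = (d₀ - 1) * S := by
    rw [hS, Finset.mul_sum]
    exact Finset.sum_congr rfl fun i _ => by ring
  have hka : ∑ i, κ i * ((d₀ - 1) * pd F κ i) = (d₀ - 1) * (d₀ * Fv) := by
    rw [← E1, Finset.mul_sum]
    exact Finset.sum_congr rfl fun i _ => by ring
  have colsum : ∑ i, κ i * (∑ j, pd2 F κ i j * ξ j) = (d₀ - 1) * S := by
    have h1 : ∑ i, κ i * (∑ j, pd2 F κ i j * ξ j)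
        = ∑ j, ξ j * (∑ i, pd2 F κ i j * κ i) := by
      simp_rw [Finset.mul_sum]
      rw [Finset.sum_comm]
      exact Finset.sum_congr rfl fun j _ => Finset.sum_congr rfl fun i _ => by ring
    rw [h1]
    calc ∑ j, ξ j * (∑ i, pd2 F κ i j * κ i)
        = ∑ j, ξ j * ((d₀ - 1) * pd F κ j) :=
          Finset.sum_congr rfl fun j _ => by rw [hcol j]
      _ = (d₀ - 1) * S := hxi
  have hquad : ∑ i, ∑ j, pd2 F κ i j * η i * η j =
      (∑ i, ∑ j, pd2 F κ i j * ξ i * ξ j) + 2 * t * ((d₀ - 1) * S)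
        + t ^ 2 * ((d₀ - 1) * (d₀ * Fv)) := by
    have step : ∀ i, ∑ j, pd2 F κ i j * η i * η j =
        (∑ j, pd2 F κ i j * ξ i * ξ j) + t * (ξ i * ((d₀ - 1) * pd F κ i))
          + t * (κ i * (∑ j, pd2 F κ i j * ξ j))
          + t ^ 2 * (κ i * ((d₀ - 1) * pd F κ i)) := by
      intro i
      have expand : ∑ j, pd2 F κ i j * η i * η j =
          (∑ j, pd2 F κ i j * ξ i * ξ j) + t * (ξ i * (∑ j, pd2 F κ i j * κ j))
            + t * (κ i * (∑ j, pd2 F κ i j * ξ j))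
            + t ^ 2 * (κ i * (∑ j, pd2 F κ i j * κ j)) := by
        have perterm : ∀ j, pd2 F κ i j * η i * η j =
            pd2 F κ i j * ξ i * ξ j + t * (ξ i * (pd2 F κ i j * κ j))
              + t * (κ i * (pd2 F κ i j * ξ j)) + t ^ 2 * (κ i * (pd2 F κ i j * κ j)) :=
          fun j => by rw [hηi i, hηi j]; ring
        rw [Finset.sum_congr rfl fun j _ => perterm j]
        simp only [Finset.sum_add_distrib, ← Finset.mul_sum]
      rw [expand, hrow i]
    calc ∑ i, ∑ j, pd2 F κ i j * η i * η j
        = ∑ i, ((∑ j, pd2 F κ i j * ξ i * ξ j) + t * (ξ i * ((d₀ - 1) * pd F κ i))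
            + t * (κ i * (∑ j, pd2 F κ i j * ξ j))
            + t ^ 2 * (κ i * ((d₀ - 1) * pd F κ i))) :=
          Finset.sum_congr rfl fun i _ => step i
      _ = (∑ i, ∑ j, pd2 F κ i j * ξ i * ξ j) + t * (∑ i, ξ i * ((d₀ - 1) * pd F κ i))
            + t * (∑ i, κ i * (∑ j, pd2 F κ i j * ξ j))
            + t ^ 2 * (∑ i, κ i * ((d₀ - 1) * pd F κ i)) := by
          rw [Finset.sum_add_distrib, Finset.sum_add_distrib, Finset.sum_add_distrib,
            ← Finset.mul_sum, ← Finset.mul_sum, ← Finset.mul_sum]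
      _ = (∑ i, ∑ j, pd2 F κ i j * ξ i * ξ j) + 2 * t * ((d₀ - 1) * S)
            + t ^ 2 * ((d₀ - 1) * (d₀ * Fv)) := by
          rw [hxi, hka, colsum]; ring
  -- conclude
  have hmain := hineq κ hκ η
  rw [hquad, hsq, hzero] at hmain
  have hSsub : S = -(t * (d₀ * Fv)) := by linarith [htD]
  have hexp : Fv⁻¹ * S ^ 2 = t ^ 2 * d₀ ^ 2 * Fv := by
    rw [hSsub]
    field_simp
  have h0 : c * (F κ)⁻¹ * (0:ℝ) ^ 2 = 0 := by ring
  rw [h0] at hmain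
  rw [hexp]
  rw [hSsub] at hmain
  ring_nf at hmain ⊢
  linarith
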